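/- Let G be a finite simple K_{1,3}-free graph with a proper coloring, and let v be a vertex colored a whose only neighbor colored b is a unique vertex w. If H is the connected component containing w of the subgraph induced by the vertices colored a or b, then H is a path. -/

import Mathlib

open SimpleGraph

/-- The claw `K_{1,3}`. -/
def claw : SimpleGraph (Fin 1 ⊕ Fin 3) := completeBipartiteGraph (Fin 1) (Fin 3)

/-- The graph `(K_2 ∪ K_1) + K_2`: vertices `3,4` are adjacent to everything,
`0,1` are adjacent, and `2` is adjacent only to `3,4`. -/
def kkJoin : SimpleGraph (Fin 5) := SimpleGraph.fromEdgeSet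
  {s(0,1), s(3,4), s(0,3), s(0,4), s(1,3), s(1,4), s(2,3), s(2,4)}

/-- `G` has no induced subgraph isomorphic to `H`. -/
def Free {W V : Type*} (H : SimpleGraph W) (G : SimpleGraph V) : Prop := IsEmpty (H ↪g G)

noncomputable def maxDeg {V : Type*} [Fintype V] (G : SimpleGraph V) : ℕ := by
  classical exact G.maxDegree

noncomputable def deg {V : Type*} [Fintype V] (G : SimpleGraph V) (v : V) : ℕ := by
  classical exact G.degree v

/-- A graph is a path graph. -/
def IsPathGraph {V : Type*} (G : SimpleGraph V) : Prop := ∃ n, Nonempty (G ≃g pathGraph n)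

/-- A graph is a cycle graph. -/
def IsCycleGraph {V : Type*} (G : SimpleGraph V) : Prop :=
  ∃ n, 3 ≤ n ∧ Nonempty (G ≃g cycleGraph n)

section Helpers

lemma reachable_induce_of_walk {V : Type*} {G : SimpleGraph V} {s : Set V} :
    ∀ {y z : V} (p : G.Walk y z) (h : ∀ u ∈ p.support, u ∈ s),
    (G.induce s).Reachable ⟨y, h _ p.start_mem_support⟩ ⟨z, h _ p.end_mem_support⟩ := by
  intro y z p
  induction p with
  | nil => intro h; rfl
  | @cons y m z hadj q ih =>
    intro h
    have hy : y ∈ s := h _ (by simp)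
    have hm : m ∈ s := h _ (by simp)
    have step : (G.induce s).Adj ⟨y, hy⟩ ⟨m, hm⟩ := by simpa using hadj
    exact step.reachable.trans (ih fun u hu => h u (by simp [hu]))

lemma induce_supp_connected' {V : Type*} (G : SimpleGraph V) (c : G.ConnectedComponent) :
    (G.induce c.supp).Connected := by
  obtain ⟨x, hx⟩ := c.exists_rep
  rw [connected_iff]
  refine ⟨?_, ⟨⟨x, by rw [ConnectedComponent.mem_supp_iff]; exact hx⟩⟩⟩
  · classical
    rintro ⟨y, hy⟩ ⟨z, hz⟩
    rw [ConnectedComponent.mem_supp_iff] at hy hz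
    have hreach : G.Reachable y z := ConnectedComponent.exact (hy.trans hz.symm)
    obtain ⟨p⟩ := hreach
    have hsupp : ∀ u ∈ p.support, u ∈ c.supp := by
      intro u hu
      rw [ConnectedComponent.mem_supp_iff, ← hy]
      exact ConnectedComponent.sound (p.takeUntil u hu).reachable.symm
    exact reachable_induce_of_walk p hsupp

open Classical in
noncomputable def nextStep {V : Type*} (G : SimpleGraph V) (p c : V) : V :=
  if h : ∃ u, G.Adj c u ∧ u ≠ p ∧ c ≠ p then h.choose else c

lemma nextStep_spec {V : Type*} {G : SimpleGraph V} {p c : V} (h : nextStep G p c ≠ c) :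
    G.Adj c (nextStep G p c) ∧ nextStep G p c ≠ p := by
  classical
  unfold nextStep at h ⊢
  by_cases hex : ∃ u, G.Adj c u ∧ u ≠ p ∧ c ≠ p
  · rw [dif_pos hex] at h ⊢
    exact ⟨hex.choose_spec.1, hex.choose_spec.2.1⟩
  · rw [dif_neg hex] at h; exact absurd rfl h

lemma nextStep_of_eq {V : Type*} {G : SimpleGraph V} {p c : V} (h : c = p) :
    nextStep G p c = c := by
  classical
  unfold nextStep
  rw [dif_neg]
  rintro ⟨u, -, -, hcp⟩; exact hcp h

lemma nextStep_end {V : Type*} {G : SimpleGraph V} {p c : V} (hcp : c ≠ p)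
    (h : nextStep G p c = c) : ∀ u, G.Adj c u → u = p := by
  classical
  intro u hu
  by_contra hup
  have hex : ∃ u, G.Adj c u ∧ u ≠ p ∧ c ≠ p := ⟨u, hu, hup, hcp⟩
  unfold nextStep at h
  rw [dif_pos hex] at h
  exact hex.choose_spec.1.ne' h

noncomputable def seqF {V : Type*} (G : SimpleGraph V) (v w : V) : ℕ → V × V
  | 0 => (v, w)
  | n + 1 => ((seqF G v w n).2, nextStep G (seqF G v w n).1 (seqF G v w n).2)

noncomputable def fseq {V : Type*} (G : SimpleGraph V) (v w : V) (n : ℕ) : V :=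
  (seqF G v w n).1

lemma key_path {V : Type*} [Fintype V] (G : SimpleGraph V)
    (hconn : G.Connected) (v w : V) (hadj : G.Adj v w)
    (hw : ∀ u, G.Adj v u → u = w)
    (hdeg : ∀ (x n1 n2 n3 : V), G.Adj x n1 → G.Adj x n2 → G.Adj x n3 →
      n1 = n2 ∨ n1 = n3 ∨ n2 = n3) :
    IsPathGraph G := by
  classical
  set f : ℕ → V := fseq G v w with hfdef
  have hf0 : f 0 = v := rfl
  have hf1 : f 1 = w := rfl
  have hstep : ∀ n, f (n + 2) = nextStep G (f n) (f (n + 1)) := fun n => rfl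
  have hP0 : f 1 ≠ f 0 := hadj.ne'
  have hadjstep : ∀ n, f (n + 2) ≠ f (n + 1) →
      G.Adj (f (n + 1)) (f (n + 2)) ∧ f (n + 2) ≠ f n := by
    intro n h
    rw [hstep n] at h ⊢
    exact nextStep_spec h
  have hadj' : ∀ n, f (n + 1) ≠ f n → G.Adj (f n) (f (n + 1)) := by
    intro n h
    cases n with
    | zero => exact hadj
    | succ m => exact (hadjstep m h).1
  have hne2 : ∀ n, f (n + 2) ≠ f (n + 1) → f (n + 2) ≠ f n :=
    fun n h => (hadjstep n h).2
  have hinj : ∀ j, (∀ k < j, f (k + 1) ≠ f k) → ∀ i < j, f i ≠ f j := by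
    intro j
    induction j using Nat.strong_induction_on with
    | _ j IH =>
      intro halive i hij heq
      rcases Nat.eq_zero_or_pos i with rfl | hi
      · obtain ⟨m, rfl⟩ : ∃ m, j = m + 1 := ⟨j - 1, by omega⟩
        have hA : G.Adj (f m) (f (m + 1)) := hadj' m (halive m (by omega))
        rw [← heq, hf0] at hA
        have hfm : f m = w := hw (f m) hA.symm
        rcases Nat.lt_trichotomy m 1 with h1 | h1 | h1
        · interval_cases m
          exact halive 0 (by omega) heq.symm
        · subst h1
          exact hne2 0 (halive 1 (by omega)) heq.symm
        · exact IH m (by omega) (fun k hk => halive k (by omega)) 1 h1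
            (by rw [hf1, ← hfm])
      · rcases Nat.lt_or_ge j (i + 3) with hj | hj
        · have : j = i + 1 ∨ j = i + 2 := by omega
          rcases this with rfl | rfl
          · exact halive i (by omega) heq.symm
          · exact hne2 i (halive (i + 1) (by omega)) heq.symm
        · obtain ⟨m, rfl⟩ : ∃ m, i = m + 1 := ⟨i - 1, by omega⟩
          obtain ⟨l, rfl⟩ : ∃ l, j = l + 1 := ⟨j - 1, by omega⟩
          have hA1 : G.Adj (f (m + 1)) (f m) :=
            (hadj' m (halive m (by omega))).symm
          have hA2 : G.Adj (f (m + 1)) (f (m + 2)) :=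
            hadj' (m + 1) (halive (m + 1) (by omega))
          have hA3 : G.Adj (f (m + 1)) (f l) := by
            have := hadj' l (halive l (by omega))
            rw [← heq] at this
            exact this.symm
          have d12 : f m ≠ f (m + 2) :=
            (hne2 m (halive (m + 1) (by omega))).symm
          have d13 : f m ≠ f l :=
            IH l (by omega) (fun k hk => halive k (by omega)) m (by omega)
          have d23 : f (m + 2) ≠ f l :=
            IH l (by omega) (fun k hk => halive k (by omega)) (m + 2) (by omega)
          rcases hdeg (f (m + 1)) (f m) (f (m + 2)) (f l) hA1 hA2 hA3 with h | h | h
          · exact d12 h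
          · exact d13 h
          · exact d23 h
  have hexN : ∃ n, f (n + 1) = f n := by
    by_contra hall
    push_neg at hall
    have hfinj : Function.Injective f := by
      intro i j h
      rcases lt_trichotomy i j with hij | rfl | hij
      · exact absurd h (hinj j (fun k _ => hall k) i hij)
      · rfl
      · exact absurd h.symm (hinj i (fun k _ => hall k) j hij)
    obtain ⟨x, y, hxy, he⟩ := Finite.exists_ne_map_eq_of_infinite f
    exact hxy (hfinj he)
  obtain ⟨N, hNstall, hNalive⟩ : ∃ N, f (N + 1) = f N ∧ ∀ k < N, f (k + 1) ≠ f k :=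
    ⟨Nat.find hexN, Nat.find_spec hexN, fun k hk => Nat.find_min hexN hk⟩
  have hN1 : 1 ≤ N := by
    rcases Nat.eq_zero_or_pos N with rfl | h
    · exact absurd hNstall hP0
    · exact h
  obtain ⟨M, rfl⟩ : ∃ M, N = M + 1 := ⟨N - 1, by omega⟩
  have hend : ∀ u, G.Adj (f (M + 1)) u → u = f M := by
    have hcp : f (M + 1) ≠ f M := hNalive M (by omega)
    rw [hstep M] at hNstall
    exact nextStep_end hcp hNstall
  have hmid : ∀ k, 0 < k → k < M + 1 → ∀ u, G.Adj (f k) u →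
      u = f (k - 1) ∨ u = f (k + 1) := by
    intro k hk0 hkN u hu
    obtain ⟨m, rfl⟩ : ∃ m, k = m + 1 := ⟨k - 1, by omega⟩
    simp only [Nat.add_sub_cancel]
    by_contra hcon
    push_neg at hcon
    obtain ⟨h1, h2⟩ := hcon
    have hA1 : G.Adj (f (m + 1)) (f m) :=
      (hadj' m (hNalive m (by omega))).symm
    have hA2 : G.Adj (f (m + 1)) (f (m + 2)) :=
      hadj' (m + 1) (hNalive (m + 1) (by omega))
    have d12 : f m ≠ f (m + 2) := (hne2 m (hNalive (m + 1) (by omega))).symm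
    rcases hdeg (f (m + 1)) (f m) (f (m + 2)) u hA1 hA2 hu with h | h | h
    · exact d12 h
    · exact h1 h.symm
    · exact h2 h.symm
  have h0nb : ∀ u, G.Adj (f 0) u → u = f 1 := by
    intro u hu
    rw [hf0] at hu
    rw [hf1]
    exact hw u hu
  have hcover0 : ∀ (x z : V) (p : G.Walk x z), (∃ k ≤ M + 1, f k = z) →
      ∃ k ≤ M + 1, f k = x := by
    intro x z p
    induction p with
    | nil => exact id
    | @cons x y z' h q ih =>
      intro hz
      obtain ⟨k, hk, rfl⟩ := ih hz
      rcases Nat.eq_zero_or_pos k with rfl | hk0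
      · exact ⟨1, by omega, (h0nb x h.symm).symm⟩
      · rcases Nat.lt_or_ge k (M + 1) with hkN | hkN
        · rcases hmid k hk0 hkN x h.symm with h' | h'
          · exact ⟨k - 1, by omega, h'.symm⟩
          · exact ⟨k + 1, by omega, h'.symm⟩
        · have hkeq : k = M + 1 := by omega
          subst hkeq
          exact ⟨M, by omega, (hend x h.symm).symm⟩
  have hcover : ∀ x : V, ∃ k ≤ M + 1, f k = x := by
    intro x
    obtain ⟨p⟩ := hconn.preconnected x v
    exact hcover0 x v p ⟨0, Nat.zero_le _, hf0⟩
  have hinj' : ∀ i, i ≤ M + 1 → ∀ j, j ≤ M + 1 → f i = f j → i = j := by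
    intro i hi j hj h
    rcases lt_trichotomy i j with hij | rfl | hij
    · exact absurd h (hinj j (fun k hk => hNalive k (by omega)) i hij)
    · rfl
    · exact absurd h.symm (hinj i (fun k hk => hNalive k (by omega)) j hij)
  have hfwd : ∀ i j : ℕ, i ≤ M + 1 → j ≤ M + 1 → i < j → G.Adj (f i) (f j) →
      j = i + 1 := by
    intro i j hi hj hij hA
    rcases Nat.eq_zero_or_pos i with rfl | hi0
    · exact hinj' j hj 1 (by omega) (h0nb (f j) hA)
    · have hiN : i < M + 1 := by omega
      rcases hmid i hi0 hiN (f j) hA with h' | h'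
      · exact absurd (hinj' j hj (i - 1) (by omega) h') (by omega)
      · exact hinj' j hj (i + 1) (by omega) h'
  have hbwd : ∀ i, i < M + 1 → G.Adj (f i) (f (i + 1)) :=
    fun i hi => hadj' i (hNalive i hi)
  let e : Fin (M + 2) ≃ V :=
    Equiv.ofBijective (fun i => f i.val)
      ⟨fun i j h => Fin.ext (hinj' i.val (by omega) j.val (by omega) h),
       fun x => by
        obtain ⟨k, hk, he⟩ := hcover x
        exact ⟨⟨k, by omega⟩, he⟩⟩
  have hiff : ∀ i j : Fin (M + 2), G.Adj (e i) (e j) ↔ (pathGraph (M + 2)).Adj i j := by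
    intro i j
    show G.Adj (f i.val) (f j.val) ↔ _
    rw [pathGraph_adj]
    constructor
    · intro hA
      rcases lt_trichotomy i.val j.val with hij | hij | hij
      · exact Or.inl (hfwd i.val j.val (by omega) (by omega) hij hA).symm
      · have : i = j := Fin.ext hij
        subst this
        exact absurd hA (G.loopless.irrefl _)
      · exact Or.inr (hfwd j.val i.val (by omega) (by omega) hij hA.symm).symm
    · rintro (h | h)
      · have := hbwd i.val (by omega)
        rwa [h] at this
      · have := hbwd j.val (by omega)
        rw [h] at this
        exact this.symm
  exact ⟨M + 2, ⟨(RelIso.mk e (fun {i j} => hiff i j)).symm⟩⟩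

end Helpers

theorem stmt_12 {V α : Type*} [Fintype V] (G : SimpleGraph V) (hclaw : _root_.Free claw G)
    (C : G.Coloring α) (a b : α) (v w : V)
    (hva : C v = a) (hvw : G.Adj v w) (hwb : C w = b)
    (huniq : ∀ w', G.Adj v w' → C w' = b → w' = w) :
    IsPathGraph ((G.induce {x | C x = a ∨ C x = b}).induce
      ((G.induce {x | C x = a ∨ C x = b}).connectedComponentMk
        ⟨w, Or.inr hwb⟩).supp) := by
  classical
  set s : Set V := {x | C x = a ∨ C x = b} with hs
  set G₁ : SimpleGraph ↥s := G.induce s with hG₁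
  set c : G₁.ConnectedComponent := G₁.connectedComponentMk ⟨w, Or.inr hwb⟩ with hc
  set G₂ : SimpleGraph ↥c.supp := G₁.induce c.supp with hG₂
  haveI : Fintype ↥c.supp := Fintype.ofFinite _
  -- vertices
  have hw's : (w : V) ∈ s := Or.inr hwb
  have hv's : (v : V) ∈ s := Or.inl hva
  set w' : ↥s := ⟨w, hw's⟩ with hw'
  set v' : ↥s := ⟨v, hv's⟩ with hv'
  have hA1 : G₁.Adj v' w' := by simpa [hG₁] using hvw
  have hw'supp : w' ∈ c.supp := by rw [ConnectedComponent.mem_supp_iff]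
  have hv'supp : v' ∈ c.supp := by
    rw [ConnectedComponent.mem_supp_iff, hc]
    exact ConnectedComponent.sound hA1.reachable
  set v₂ : ↥c.supp := ⟨v', hv'supp⟩ with hv₂
  set w₂ : ↥c.supp := ⟨w', hw'supp⟩ with hw₂
  have hadj₂ : G₂.Adj v₂ w₂ := by simpa [hG₂, hG₁] using hvw
  have huniq₂ : ∀ u, G₂.Adj v₂ u → u = w₂ := by
    intro u hu
    have hGadj : G.Adj v u.val.val := by simpa [hG₂, hG₁] using hu
    have hne : C u.val.val ≠ a := by
      rw [← hva]
      exact (C.valid hGadj).symm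
    have hbu : C u.val.val = b := u.val.prop.resolve_left hne
    have : u.val.val = w := huniq _ hGadj hbu
    exact Subtype.ext (Subtype.ext this)
  have hdeg : ∀ (x n1 n2 n3 : ↥c.supp), G₂.Adj x n1 → G₂.Adj x n2 → G₂.Adj x n3 →
      n1 = n2 ∨ n1 = n3 ∨ n2 = n3 := by
    intro x y1 y2 y3 h1 h2 h3
    by_contra hcon
    push_neg at hcon
    obtain ⟨d12, d13, d23⟩ := hcon
    have hG1 : G.Adj x.val.val y1.val.val := by simpa [hG₂, hG₁] using h1
    have hG2 : G.Adj x.val.val y2.val.val := by simpa [hG₂, hG₁] using h2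
    have hG3 : G.Adj x.val.val y3.val.val := by simpa [hG₂, hG₁] using h3
    have hcolor : ∀ (z : ↥c.supp), G.Adj x.val.val z.val.val →
        C z.val.val ≠ C x.val.val := fun z hz => (C.valid hz).symm
    have hsame : ∀ (z z' : ↥c.supp), G.Adj x.val.val z.val.val →
        G.Adj x.val.val z'.val.val → C z.val.val = C z'.val.val := by
      intro z z' hz hz'
      rcases x.val.prop with hx | hx
      · have h1 : C z.val.val = b := z.val.prop.resolve_left
          (fun h => hcolor z hz (h.trans hx.symm))
        have h2 : C z'.val.val = b := z'.val.prop.resolve_left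
          (fun h => hcolor z' hz' (h.trans hx.symm))
        rw [h1, h2]
      · have h1 : C z.val.val = a := z.val.prop.resolve_right
          (fun h => hcolor z hz (h.trans hx.symm))
        have h2 : C z'.val.val = a := z'.val.prop.resolve_right
          (fun h => hcolor z' hz' (h.trans hx.symm))
        rw [h1, h2]
    have hna12 : ¬ G.Adj y1.val.val y2.val.val :=
      fun h => C.valid h (hsame y1 y2 hG1 hG2)
    have hna13 : ¬ G.Adj y1.val.val y3.val.val :=
      fun h => C.valid h (hsame y1 y3 hG1 hG3)
    have hna23 : ¬ G.Adj y2.val.val y3.val.val :=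
      fun h => C.valid h (hsame y2 y3 hG2 hG3)
    have hd12 : y1.val.val ≠ y2.val.val :=
      fun h => d12 (Subtype.ext (Subtype.ext h))
    have hd13 : y1.val.val ≠ y3.val.val :=
      fun h => d13 (Subtype.ext (Subtype.ext h))
    have hd23 : y2.val.val ≠ y3.val.val :=
      fun h => d23 (Subtype.ext (Subtype.ext h))
    let φ : Fin 1 ⊕ Fin 3 → V := Sum.elim (fun _ => x.val.val) ![y1.val.val, y2.val.val, y3.val.val]
    have hinj : Function.Injective φ := by
      rintro (i | i) (j | j) h
      · rw [Subsingleton.elim i j]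
      · exfalso
        fin_cases j <;> simp only [φ, Sum.elim_inl, Sum.elim_inr,
          Matrix.cons_val_zero, Matrix.cons_val_one, Matrix.head_cons,
          Matrix.cons_val_two, Matrix.tail_cons] at h
        · exact hG1.ne h
        · exact hG2.ne h
        · exact hG3.ne h
      · exfalso
        fin_cases i <;> simp only [φ, Sum.elim_inl, Sum.elim_inr,
          Matrix.cons_val_zero, Matrix.cons_val_one, Matrix.head_cons,
          Matrix.cons_val_two, Matrix.tail_cons] at h
        · exact hG1.ne h.symm
        · exact hG2.ne h.symm
        · exact hG3.ne h.symm
      · congr 1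
        fin_cases i <;> fin_cases j <;> simp only [φ, Sum.elim_inr,
          Matrix.cons_val_zero, Matrix.cons_val_one, Matrix.head_cons,
          Matrix.cons_val_two, Matrix.tail_cons] at h ⊢ <;> first
          | rfl
          | exact absurd h hd12 | exact absurd h hd13 | exact absurd h hd23
          | exact absurd h.symm hd12 | exact absurd h.symm hd13 | exact absurd h.symm hd23
    have hadjφ : ∀ (i : Fin 1) (j : Fin 3), G.Adj (φ (Sum.inl i)) (φ (Sum.inr j)) := by
      intro i j
      fin_cases j
      · exact hG1
      · exact hG2
      · exact hG3
    have hnadjφ : ∀ (i j : Fin 3), ¬ G.Adj (φ (Sum.inr i)) (φ (Sum.inr j)) := by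
      intro i j
      fin_cases i <;> fin_cases j <;>
        first
          | exact G.loopless.irrefl _
          | exact hna12 | exact hna13 | exact hna23
          | exact fun h => hna12 h.symm
          | exact fun h => hna13 h.symm
          | exact fun h => hna23 h.symm
    have hrel : ∀ {p q : Fin 1 ⊕ Fin 3}, G.Adj (φ p) (φ q) ↔ claw.Adj p q := by
      rintro (i | i) (j | j)
      · simp [φ, claw]
      · constructor
        · intro _; simp [claw]
        · intro _; exact hadjφ i j
      · constructor
        · intro _; simp [claw]
        · intro _; exact (hadjφ j i).symm
      · constructor
        · intro h; exact absurd h (hnadjφ i j)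
        · intro h; exact absurd h (by simp [claw])
    exact hclaw.false ⟨⟨φ, hinj⟩, hrel⟩
  exact key_path G₂ (induce_supp_connected' G₁ c) v₂ w₂ hadj₂ huniq₂ hdeg
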